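/- For any non-trivial partition Π of the vertex set of a finite connected multigraph G, every spanning tree T of G admits at least one admissible ordering, i.e., an ordering τ of its edges making T_τ a trans-block ordered tree for Π; consequently w^Π(G,T) > 0 for every spanning tree T. -/

import Mathlib

open scoped Classical
open MeasureTheory

/-- A multigraph on vertex type `V` with edge type `E`: each edge has an
unordered pair of endpoints (self-loops and multiple edges allowed). -/
structure Multigraph (V E : Type) where
  ends : E → Sym2 V

namespace Multigraph

variable {V E : Type}

/-- Two vertices are connected using only edges in the subset `S`. -/
def Connects (G : Multigraph V E) (S : Finset E) (v w : V) : Prop :=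
  Relation.ReflTransGen (fun a b => ∃ e ∈ S, G.ends e = s(a, b)) v w

/-- The multigraph is connected. -/
def IsConnected (G : Multigraph V E) [Fintype E] : Prop :=
  ∀ v w : V, G.Connects Finset.univ v w

/-- A spanning tree: a spanning connected edge subset with `|V| - 1` edges. -/
def IsSpanningTree (G : Multigraph V E) [Fintype V] [Fintype E] (T : Finset E) : Prop :=
  (∀ v w : V, G.Connects T v w) ∧ T.card = Fintype.card V - 1

/-- Kruskal's greedy algorithm: process the edges in increasing order of the
Hepp sector `σ`, inserting an edge iff it does not create a cycle (i.e. iff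
its endpoints are not yet connected by the edges selected so far). -/
noncomputable def kruskal (G : Multigraph V E) [Fintype E]
    (σ : E ≃ Fin (Fintype.card E)) : Finset E :=
  ((List.finRange (Fintype.card E)).map σ.symm).foldl
    (fun S e => if ∀ a b, G.ends e = s(a, b) → ¬ G.Connects S a b then insert e S else S) ∅

/-- The symmetric weight `w_s(G,T)`: the fraction of Hepp sectors for which
`T` is the Kruskal leading tree. -/
noncomputable def ws (G : Multigraph V E) [Fintype V] [Fintype E] (T : Finset E) : ℚ :=
  (Fintype.card {σ : E ≃ Fin (Fintype.card E) // G.kruskal σ = T} : ℚ) /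
    (Nat.factorial (Fintype.card E) : ℚ)

/-- Updating the merge relation (which vertices have been identified) after
contracting the edge `e`: the equivalence closure of `M` together with the
pair of endpoints of `e`. -/
def mergeStep (G : Multigraph V E) (M : V → V → Prop) (e : E) : V → V → Prop :=
  Relation.EqvGen (fun a b => M a b ∨ G.ends e = s(a, b))

/-- Updating the block (partition) relation after contracting the trans-block
edge `e`: the new merged vertex forms a singleton block, the endpoints of `e`
are removed from their old blocks, and all other blocks are unchanged. -/
def blockStep (G : Multigraph V E) (M B : V → V → Prop) (e : E) : V → V → Prop :=
  fun x y => ∀ a b, G.ends e = s(a, b) →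
    ((G.mergeStep M e x a ∧ G.mergeStep M e y a) ∨
      (B x y ∧ ¬ G.mergeStep M e x a ∧ ¬ G.mergeStep M e y a))

/-- One contraction step on the pair (merge relation, block relation). -/
def stepPair (G : Multigraph V E) (s : (V → V → Prop) × (V → V → Prop)) (e : E) :
    (V → V → Prop) × (V → V → Prop) :=
  (G.mergeStep s.1 e, G.blockStep s.1 s.2 e)

/-- The state (merge relation, block relation) after contracting, in order,
the edges of the list `L`, starting from the discrete merge relation `Eq` and
initial block (partition) relation `B0`. -/
def state (G : Multigraph V E) (B0 : V → V → Prop) (L : List E) :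
    (V → V → Prop) × (V → V → Prop) :=
  L.foldl G.stepPair (Eq, B0)

/-- An edge is trans-block for the block relation `B` if its endpoints lie in
distinct blocks (in particular it is not a self-loop, even after merging). -/
def TransBlock (G : Multigraph V E) (B : V → V → Prop) (e : E) : Prop :=
  ∀ a b, G.ends e = s(a, b) → ¬ B a b

/-- The ordered list of edges `L` is a trans-block ordered forest for the
initial partition `B0`: each successive edge is trans-block for the
successively contracted partition. -/
def IsTransBlockSeq (G : Multigraph V E) (B0 : V → V → Prop) (L : List E) : Prop :=
  ∀ p (h : p < L.length), G.TransBlock (G.state B0 (L.take p)).2 (L.get ⟨p, h⟩)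

/-- `k_p`: the number of trans-block edges of the `p`-th contracted graph for
the `p`-th contracted partition (already-contracted edges are self-loops of
the contracted graph, hence never trans-block). -/
noncomputable def kcount (G : Multigraph V E) [Fintype E] (B0 : V → V → Prop)
    (L : List E) (p : ℕ) : ℕ :=
  (Finset.univ.filter fun e => G.TransBlock (G.state B0 (L.take p)).2 e).card

/-- First contact index `i(v,v')`: smallest `p` such that `v, v'` lie in
different blocks of `Π_p` (with the convention `i(v,v) = -1, j(v,v) = 0`,
realized here by taking `i(v,v) = j(v,v) = 0`, which makes the corresponding
products empty, as in the convention `X_{v,v} = 1`). -/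
noncomputable def iIdx (G : Multigraph V E) (B0 : V → V → Prop) (L : List E)
    (v v' : V) : ℕ :=
  if v = v' then 0 else sInf {p | ¬ (G.state B0 (L.take p)).2 v v'}

/-- Second contact index `j(v,v')`: smallest `p` such that `v, v'` have been
merged into a single vertex of `G_p`. -/
noncomputable def jIdx (G : Multigraph V E) (B0 : V → V → Prop) (L : List E)
    (v v' : V) : ℕ :=
  sInf {p | (G.state B0 (L.take p)).1 v v'}

/-- Entry of the contact matrix: `X_{v,v'}(u) = ∏_{i(v,v') < k ≤ j(v,v')} u_k`,
where the variable `u_k` (1 ≤ k ≤ |V|-1) is represented by `w ⟨k-1⟩`. -/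
noncomputable def Xent (G : Multigraph V E) (B0 : V → V → Prop) (L : List E)
    (n : ℕ) (w : Fin n → ℝ) (v v' : V) : ℝ :=
  ∏ k : Fin n,
    if G.iIdx B0 L v v' ≤ (k : ℕ) ∧ (k : ℕ) < G.jIdx B0 L v v' then w k else 1

/-- Contact-matrix factor `X_{v(ℓ),v'(ℓ)}(u)` of a (loop) edge `ℓ`. -/
noncomputable def XentE (G : Multigraph V E) (B0 : V → V → Prop) (L : List E)
    (n : ℕ) (w : Fin n → ℝ) (e : E) : ℝ :=
  ∏ k : Fin n,
    if (∀ a b, G.ends e = s(a, b) →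
        (G.iIdx B0 L a b ≤ (k : ℕ) ∧ (k : ℕ) < G.jIdx B0 L a b)) then w k else 1

/-- Tree edge factor `Y_ℓ(u) = ∏_{i(v(ℓ),v'(ℓ)) < k < j(v(ℓ),v'(ℓ))} u_k`. -/
noncomputable def Yent (G : Multigraph V E) (B0 : V → V → Prop) (L : List E)
    (n : ℕ) (w : Fin n → ℝ) (e : E) : ℝ :=
  ∏ k : Fin n,
    if (∀ a b, G.ends e = s(a, b) →
        (G.iIdx B0 L a b ≤ (k : ℕ) ∧ (k : ℕ) + 1 < G.jIdx B0 L a b)) then w k else 1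

/-- The weight `∏_{p=0}^{|V|-2} 1/k_p` of a trans-block ordered tree, and `0`
for a non-admissible ordering. -/
noncomputable def wOrd (G : Multigraph V E) [Fintype V] [Fintype E]
    (B0 : V → V → Prop) (L : List E) : ℚ :=
  if G.IsTransBlockSeq B0 L then
    ∏ p ∈ Finset.range (Fintype.card V - 1), ((G.kcount B0 L p : ℚ))⁻¹
  else 0

/-- The partition tree weight `w^Π(G,T)`: the sum over all admissible
orderings `τ` of `T` of `∏_{p=0}^{|V|-2} 1/k_p(T_τ)`. -/
noncomputable def wPi (G : Multigraph V E) [Fintype V] [Fintype E]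
    (B0 : V → V → Prop) (T : Finset E) : ℚ :=
  ∑ τ : Fin T.card ≃ {e // e ∈ T}, G.wOrd B0 (List.ofFn fun i => ((τ i : E)))

end Multigraph
namespace Multigraph

variable {V E : Type}

theorem mergeStep_equiv (G : Multigraph V E) (M : V → V → Prop) (e : E) :
    Equivalence (G.mergeStep M e) := Relation.EqvGen.is_equivalence _

theorem le_mergeStep (G : Multigraph V E) {M : V → V → Prop} (e : E) {x y : V}
    (h : M x y) : G.mergeStep M e x y := Relation.EqvGen.rel _ _ (Or.inl h)

theorem mergeStep_ends (G : Multigraph V E) (M : V → V → Prop) {e : E} {a b : V}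
    (h : G.ends e = s(a, b)) : G.mergeStep M e a b := Relation.EqvGen.rel _ _ (Or.inr h)

theorem mergeStep_char (G : Multigraph V E) {M : V → V → Prop} (hM : Equivalence M)
    {e : E} {a b : V} (h : G.ends e = s(a, b)) {x y : V} (hxy : G.mergeStep M e x y) :
    M x y ∨ (M x a ∧ M y b) ∨ (M x b ∧ M y a) := by
  induction hxy with
  | rel u v huv =>
      rcases huv with h1 | h1
      · exact Or.inl h1
      · rw [h] at h1
        rw [Sym2.eq_iff] at h1
        rcases h1 with ⟨ha, hb⟩ | ⟨ha, hb⟩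
        · subst ha; subst hb; exact Or.inr (Or.inl ⟨hM.refl _, hM.refl _⟩)
        · subst ha; subst hb; exact Or.inr (Or.inr ⟨hM.refl _, hM.refl _⟩)
  | refl u => exact Or.inl (hM.refl u)
  | symm u v _ ih =>
      rcases ih with h1 | ⟨h1, h2⟩ | ⟨h1, h2⟩
      · exact Or.inl (hM.symm h1)
      · exact Or.inr (Or.inr ⟨h2, h1⟩)
      · exact Or.inr (Or.inl ⟨h2, h1⟩)
  | trans u v w _ _ ih1 ih2 =>
      rcases ih1 with h1 | ⟨h1, h2⟩ | ⟨h1, h2⟩ <;>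
        rcases ih2 with h3 | ⟨h3, h4⟩ | ⟨h3, h4⟩
      · exact Or.inl (hM.trans h1 h3)
      · exact Or.inr (Or.inl ⟨hM.trans h1 h3, h4⟩)
      · exact Or.inr (Or.inr ⟨hM.trans h1 h3, h4⟩)
      · exact Or.inr (Or.inl ⟨h1, hM.trans (hM.symm h3) h2⟩)
      · exact Or.inl (hM.trans (hM.trans h1 (hM.trans (hM.symm h3) h2)) (hM.symm h4))
      · exact Or.inl (hM.trans h1 (hM.symm h4))
      · exact Or.inr (Or.inr ⟨h1, hM.trans (hM.symm h3) h2⟩)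
      · exact Or.inl (hM.trans h1 (hM.symm h4))
      · exact Or.inl (hM.trans (hM.trans h1 (hM.trans (hM.symm h3) h2)) (hM.symm h4))


theorem blockStep_equiv (G : Multigraph V E) {M B : V → V → Prop}
    (hB : Equivalence B) (e : E) : Equivalence (G.blockStep M B e) := by
  constructor
  · intro x a b hab
    by_cases hx : G.mergeStep M e x a
    · exact Or.inl ⟨hx, hx⟩
    · exact Or.inr ⟨hB.refl x, hx, hx⟩
  · intro x y h a b hab
    rcases h a b hab with ⟨h1, h2⟩ | ⟨h1, h2, h3⟩
    · exact Or.inl ⟨h2, h1⟩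
    · exact Or.inr ⟨hB.symm h1, h3, h2⟩
  · intro x y z h h' a b hab
    rcases h a b hab with ⟨h1, h2⟩ | ⟨h1, h2, h3⟩ <;>
      rcases h' a b hab with ⟨h4, h5⟩ | ⟨h4, h5, h6⟩
    · exact Or.inl ⟨h1, h5⟩
    · exact absurd h2 h5
    · exact absurd h4 h3
    · exact Or.inr ⟨hB.trans h1 h4, h2, h6⟩

@[simp] theorem state_nil (G : Multigraph V E) (B0 : V → V → Prop) :
    G.state B0 [] = (Eq, B0) := rfl

theorem state_append (G : Multigraph V E) (B0 : V → V → Prop) (L : List E) (e : E) :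
    G.state B0 (L ++ [e]) = G.stepPair (G.state B0 L) e := by
  simp [Multigraph.state, List.foldl_append]

/-- The bundle of invariants maintained along a trans-block contraction. -/
def Good (G : Multigraph V E) [Fintype V] (B0 : V → V → Prop) (L : List E) : Prop :=
  Equivalence (G.state B0 L).1 ∧ Equivalence (G.state B0 L).2 ∧
  (∀ x y, (G.state B0 L).1 x y → (G.state B0 L).2 x y) ∧
  (∀ x y, (G.state B0 L).2 x y → (G.state B0 L).1 x y ∨ B0 x y) ∧
  (∀ e ∈ L, ∀ a b, G.ends e = s(a, b) → (G.state B0 L).1 a b) ∧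
  (∃ S : Finset V, Fintype.card V ≤ S.card + L.length ∧
    ∀ x ∈ S, ∀ y ∈ S, x ≠ y → ¬ (G.state B0 L).1 x y)

theorem good_nil (G : Multigraph V E) [Fintype V] {B0 : V → V → Prop}
    (hB0 : Equivalence B0) : G.Good B0 [] := by
  refine ⟨eq_equivalence, hB0, ?_, fun x y h => Or.inr h, by simp, ⟨Finset.univ, by simp, ?_⟩⟩
  · rintro x y rfl; exact hB0.refl x
  · intro x _ y _ hxy h; exact hxy h

theorem good_snoc (G : Multigraph V E) [Fintype V] {B0 : V → V → Prop}
    {L : List E} (h : G.Good B0 L) (e : E) : G.Good B0 (L ++ [e]) := by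
  obtain ⟨hM, hB, hMB, hBM, hE, S, hScard, hSpw⟩ := h
  set M := (G.state B0 L).1 with hMdef
  set B := (G.state B0 L).2 with hBdef
  have hst : G.state B0 (L ++ [e]) = (G.mergeStep M e, G.blockStep M B e) :=
    G.state_append B0 L e
  obtain ⟨⟨a, b⟩, hab⟩ := Quot.exists_rep (G.ends e)
  replace hab : G.ends e = s(a, b) := hab.symm
  have hM' := G.mergeStep_equiv M e
  have hMab : G.mergeStep M e a b := G.mergeStep_ends M hab
  refine ⟨?_, ?_, ?_, ?_, ?_, ?_⟩
  · rw [hst]; exact hM'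
  · rw [hst]; exact G.blockStep_equiv hB e
  · rw [hst]
    intro x y hxy a' b' hab'
    by_cases hxa : G.mergeStep M e x a'
    · exact Or.inl ⟨hxa, hM'.trans (hM'.symm hxy) hxa⟩
    · have hya : ¬ G.mergeStep M e y a' := fun hya => hxa (hM'.trans hxy hya)
      have hMa'b' : G.mergeStep M e a' b' := G.mergeStep_ends M hab'
      have hxy' : M x y := by
        rcases G.mergeStep_char hM hab' hxy with h1 | ⟨h1, h2⟩ | ⟨h1, h2⟩
        · exact h1
        · exact absurd (G.le_mergeStep e h1) hxa
        · exact absurd (hM'.trans (G.le_mergeStep e h1) (hM'.symm hMa'b')) hxa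
      exact Or.inr ⟨hMB _ _ hxy', hxa, hya⟩
  · rw [hst]
    intro x y hxy
    rcases hxy a b hab with ⟨h1, h2⟩ | ⟨h1, _, _⟩
    · exact Or.inl (hM'.trans h1 (hM'.symm h2))
    · rcases hBM _ _ h1 with h2 | h2
      · exact Or.inl (G.le_mergeStep e h2)
      · exact Or.inr h2
  · rw [hst]
    intro e' he' a' b' hab'
    rcases List.mem_append.mp he' with h1 | h1
    · exact G.le_mergeStep e (hE e' h1 a' b' hab')
    · rw [List.mem_singleton] at h1
      subst h1
      exact G.mergeStep_ends M hab'
  · rw [hst]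
    by_cases hex : ∃ x0 ∈ S, M x0 a
    · obtain ⟨x0, hx0S, hx0a⟩ := hex
      refine ⟨S.erase x0, ?_, ?_⟩
      · have := Finset.card_erase_add_one hx0S
        simp only [List.length_append, List.length_singleton]
        omega
      · intro x hx y hy hxy hMxy
        have hxS := Finset.mem_of_mem_erase hx
        have hyS := Finset.mem_of_mem_erase hy
        rcases G.mergeStep_char hM hab hMxy with h1 | ⟨h1, h2⟩ | ⟨h1, h2⟩
        · exact hSpw x hxS y hyS hxy h1
        · have : x = x0 := by
            by_contra hne
            exact hSpw x hxS x0 hx0S hne (hM.trans h1 (hM.symm hx0a))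
          exact Finset.ne_of_mem_erase hx this
        · have : y = x0 := by
            by_contra hne
            exact hSpw y hyS x0 hx0S hne (hM.trans h2 (hM.symm hx0a))
          exact Finset.ne_of_mem_erase hy this
    · refine ⟨S, ?_, ?_⟩
      · simp only [List.length_append, List.length_singleton]; omega
      · intro x hx y hy hxy hMxy
        rcases G.mergeStep_char hM hab hMxy with h1 | ⟨h1, _⟩ | ⟨_, h1⟩
        · exact hSpw x hx y hy hxy h1
        · exact hex ⟨x, hx, h1⟩
        · exact hex ⟨y, hy, h1⟩

theorem exists_transBlock (G : Multigraph V E) [Fintype V] [Fintype E]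
    {B0 : V → V → Prop} (hB0 : Equivalence B0) (hnt : ∃ v w : V, ¬ B0 v w)
    {T : Finset E} (hTc : ∀ v w : V, G.Connects T v w)
    {L : List E} (hGood : G.Good B0 L)
    {R : Finset E} (hUnion : ∀ e ∈ T, e ∈ L ∨ e ∈ R)
    (hlen : L.length + 2 ≤ Fintype.card V) :
    ∃ e ∈ R, G.TransBlock (G.state B0 L).2 e := by
  obtain ⟨hM, hB, hMB, hBM, hE, S, hScard, hSpw⟩ := hGood
  set M := (G.state B0 L).1 with hMdef
  set B := (G.state B0 L).2 with hBdef
  by_contra hcon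
  push_neg at hcon
  -- every edge of T has B-related endpoints
  have hTB : ∀ e ∈ T, ∀ a b, G.ends e = s(a, b) → B a b := by
    intro e he a b hab
    rcases hUnion e he with h1 | h1
    · exact hMB _ _ (hE e h1 a b hab)
    · have := hcon e h1
      unfold TransBlock at this
      push_neg at this
      obtain ⟨a', b', hab', hB'⟩ := this
      rw [hab] at hab'
      rw [Sym2.eq_iff] at hab'
      rcases hab' with ⟨rfl, rfl⟩ | ⟨rfl, rfl⟩
      · exact hB'
      · exact hB.symm hB'
  -- hence B is the full relation
  have hfull : ∀ v w : V, B v w := by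
    intro v w
    induction hTc v w with
    | refl => exact hB.refl v
    | tail _ hstep ih =>
        obtain ⟨e, he, hab⟩ := hstep
        exact hB.trans ih (hTB e he _ _ hab)
  obtain ⟨v, w, hvw⟩ := hnt
  have hMvw : M v w := by
    rcases hBM v w (hfull v w) with h | h
    · exact h
    · exact absurd h hvw
  -- pick two M-unrelated vertices
  have hS2 : 1 < S.card := by omega
  obtain ⟨x, hx, y, hy, hxy⟩ := Finset.one_lt_card.mp hS2
  have hxyM : ¬ M x y := hSpw x hx y hy hxy
  -- find z not M-related to v
  have hz : ∃ z : V, ¬ M v z := by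
    by_cases h : M v x
    · exact ⟨y, fun h2 => hxyM (hM.trans (hM.symm h) h2)⟩
    · exact ⟨x, h⟩
  obtain ⟨z, hvz⟩ := hz
  have hwz : ¬ M w z := fun h => hvz (hM.trans hMvw h)
  have hB0vz : B0 v z := by
    rcases hBM v z (hfull v z) with h | h
    · exact absurd h hvz
    · exact h
  have hB0wz : B0 w z := by
    rcases hBM w z (hfull w z) with h | h
    · exact absurd h hwz
    · exact h
  exact hvw (hB0.trans hB0vz (hB0.symm hB0wz))

theorem isTransBlockSeq_snoc (G : Multigraph V E) {B0 : V → V → Prop}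
    {L : List E} (h : G.IsTransBlockSeq B0 L) {e : E}
    (he : G.TransBlock (G.state B0 L).2 e) :
    G.IsTransBlockSeq B0 (L ++ [e]) := by
  intro p hp
  have hp' : p < L.length + 1 := by
    simpa using hp
  rcases lt_or_eq_of_le (Nat.lt_succ_iff.mp hp') with h1 | h1
  · have htake : (L ++ [e]).take p = L.take p := List.take_append_of_le_length (le_of_lt h1)
    have hget : (L ++ [e]).get ⟨p, hp⟩ = L.get ⟨p, h1⟩ := by
      simp [List.getElem_append, h1]
    rw [htake, hget]
    exact h p h1
  · subst h1
    have htake : (L ++ [e]).take L.length = L := List.take_left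
    have hget : (L ++ [e]).get ⟨L.length, hp⟩ = e := by
      simp
    rw [htake, hget]
    exact he

theorem exists_admissible (G : Multigraph V E) [Fintype V] [Fintype E] [Nonempty V]
    {B0 : V → V → Prop} (hB0 : Equivalence B0) (hnt : ∃ v w : V, ¬ B0 v w)
    {T : Finset E} (hTc : ∀ v w : V, G.Connects T v w)
    (hTcard : T.card = Fintype.card V - 1) :
    ∃ L : List E, L.Nodup ∧ L.toFinset = T ∧ G.IsTransBlockSeq B0 L := by
  suffices H : ∀ n : ℕ, ∀ L : List E, L.Nodup → L.toFinset ⊆ T →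
      (T \ L.toFinset).card = n → G.Good B0 L → G.IsTransBlockSeq B0 L →
      ∃ L' : List E, L'.Nodup ∧ L'.toFinset = T ∧ G.IsTransBlockSeq B0 L' by
    refine H (T \ (∅ : Finset E)).card [] (by simp) (by simp) (by simp) (G.good_nil hB0) ?_
    intro p hp
    simp at hp
  intro n
  induction n with
  | zero =>
      intro L hnd hsub hcard _ hseq
      have hsub' : T ⊆ L.toFinset :=
        Finset.sdiff_eq_empty_iff_subset.mp (Finset.card_eq_zero.mp hcard)
      exact ⟨L, hnd, Finset.Subset.antisymm hsub hsub', hseq⟩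
  | succ n ih =>
      intro L hnd hsub hcard hGood hseq
      have hlenT : L.toFinset.card = L.length := List.toFinset_card_of_nodup hnd
      have hsd : (T \ L.toFinset).card + L.toFinset.card = T.card :=
        Finset.card_sdiff_add_card_eq_card hsub
      have hV1 : 1 ≤ Fintype.card V := Fintype.card_pos
      have hlen : L.length + 2 ≤ Fintype.card V := by omega
      have hUnion : ∀ e ∈ T, e ∈ L ∨ e ∈ T \ L.toFinset := by
        intro e he
        by_cases h : e ∈ L.toFinset
        · exact Or.inl (List.mem_toFinset.mp h)
        · exact Or.inr (Finset.mem_sdiff.mpr ⟨he, h⟩)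
      obtain ⟨e, heR, he⟩ := G.exists_transBlock hB0 hnt hTc hGood hUnion hlen
      have heT : e ∈ T := (Finset.mem_sdiff.mp heR).1
      have heL : e ∉ L := fun h => (Finset.mem_sdiff.mp heR).2 (List.mem_toFinset.mpr h)
      have hnd' : (L ++ [e]).Nodup := by
        simp [List.nodup_append, hnd, heL]
        intro a ha hae; exact heL (hae ▸ ha)
      have hfin' : (L ++ [e]).toFinset = insert e L.toFinset := by
        ext x; simp only [List.mem_toFinset, List.mem_append, List.mem_singleton, Finset.mem_insert]; tauto
      have hsub2 : (L ++ [e]).toFinset ⊆ T := by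
        rw [hfin']
        exact Finset.insert_subset heT hsub
      refine ih (L ++ [e]) hnd' hsub2 ?_ (G.good_snoc hGood e) (G.isTransBlockSeq_snoc hseq he)
      have hsd2 : (T \ (L ++ [e]).toFinset).card + (L ++ [e]).toFinset.card = T.card :=
        Finset.card_sdiff_add_card_eq_card hsub2
      have hc2 : (L ++ [e]).toFinset.card = L.toFinset.card + 1 := by
        rw [hfin', Finset.card_insert_of_notMem (fun h => heL (List.mem_toFinset.mp h))]
      omega

end Multigraph

/-- for a non-trivial partition `B0`, every spanning tree `T`
admits at least one admissible (trans-block) ordering; consequently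
`w^Π(G,T) > 0`. -/
theorem exists_admissible_ordering_and_wPi_pos
    {V E : Type} [Fintype V] [Fintype E] [Nonempty V]
    (G : Multigraph V E) (hG : G.IsConnected)
    (B0 : V → V → Prop) (hB0 : Equivalence B0)
    (hnt : ∃ v w : V, ¬ B0 v w)
    (T : Finset E) (hT : G.IsSpanningTree T) :
    (∃ L : List E, L.Nodup ∧ L.toFinset = T ∧ G.IsTransBlockSeq B0 L) ∧
      0 < G.wPi B0 T := by
  obtain ⟨hTc, hTcard⟩ := hT
  obtain ⟨L, hnd, hfin, hseq⟩ := G.exists_admissible hB0 hnt hTc hTcard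
  refine ⟨⟨L, hnd, hfin, hseq⟩, ?_⟩
  have hlenL : L.length = T.card := by
    rw [← hfin]; exact (List.toFinset_card_of_nodup hnd).symm
  have hmem : ∀ i : Fin L.length, L.get i ∈ T := fun i => by
    rw [← hfin]; exact List.mem_toFinset.mpr (List.get_mem L i)
  let f : Fin T.card → {e // e ∈ T} := fun i => ⟨L.get (Fin.cast hlenL.symm i), hmem _⟩
  have hinj : Function.Injective f := by
    intro i j hij
    have h1 : L.get (Fin.cast hlenL.symm i) = L.get (Fin.cast hlenL.symm j) :=
      Subtype.ext_iff.mp hij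
    have h2 := List.nodup_iff_injective_get.mp hnd h1
    exact Fin.cast_injective hlenL.symm h2
  have hbij : Function.Bijective f :=
    (Fintype.bijective_iff_injective_and_card f).mpr ⟨hinj, by simp⟩
  let τ : Fin T.card ≃ {e // e ∈ T} := Equiv.ofBijective f hbij
  have hofn : (List.ofFn fun i => ((τ i : E))) = L := by
    have h1 : (List.ofFn fun i => ((τ i : E)))
        = List.ofFn (fun i : Fin T.card => L.get (Fin.cast hlenL.symm i)) := rfl
    rw [h1, ← List.ofFn_congr hlenL L.get, List.ofFn_get]
  have hwpos : 0 < G.wOrd B0 L := by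
    rw [Multigraph.wOrd, if_pos hseq]
    refine Finset.prod_pos ?_
    intro p hp
    rw [Finset.mem_range] at hp
    have hpL : p < L.length := by omega
    have hk : 0 < G.kcount B0 L p := by
      refine Finset.card_pos.mpr ⟨L.get ⟨p, hpL⟩, ?_⟩
      simp only [Finset.mem_filter, Finset.mem_univ, true_and]
      exact hseq p hpL
    exact inv_pos.mpr (by exact_mod_cast hk)
  rw [Multigraph.wPi]
  refine Finset.sum_pos' ?_ ⟨τ, Finset.mem_univ τ, ?_⟩
  · intro σ _
    rw [Multigraph.wOrd]
    split
    · exact Finset.prod_nonneg fun p _ => inv_nonneg.mpr (by positivity)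
    · exact le_refl 0
  · rw [hofn]
    exact hwpos
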